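/- (Holonomy angle lemma, quantitative form.) Let d, d', l, ψ ∈ ℝ with 0 < d ≤ d' and 0 ≤ l ≤ s(d), where s(d) := 2·arcsinh(1/sinh(d/2)). If 1/cosh(l/2) − 2·tanh²(d/2)·cos ψ + cosh(l/2)·tanh⁴(d/2) = (1/cosh⁴(d/2))·(1/cosh(l/2))·cosh²(d'/2), then cos ψ ≤ (1 + tanh(d/2))/2. -/

import Mathlib

open Real

/-- The holonomy angle lemma, quantitative form. -/
theorem holonomy_angle_lemma
    (d d' l ψ : ℝ) (hd : 0 < d) (hdd' : d ≤ d')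
    (hl0 : 0 ≤ l) (hls : l ≤ 2 * Real.arsinh (1 / Real.sinh (d / 2)))
    (heq : 1 / Real.cosh (l / 2) - 2 * Real.tanh (d / 2) ^ 2 * Real.cos ψ +
        Real.cosh (l / 2) * Real.tanh (d / 2) ^ 4
      = (1 / Real.cosh (d / 2) ^ 4) * (1 / Real.cosh (l / 2)) * Real.cosh (d' / 2) ^ 2) :
    Real.cos ψ ≤ (1 + Real.tanh (d / 2)) / 2 := by
  set t := Real.tanh (d / 2) with ht
  set c := Real.cosh (l / 2) with hc
  have hd2 : 0 < d / 2 := by linarith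
  have hsh : 0 < Real.sinh (d / 2) := by rwa [Real.sinh_pos_iff]
  have hch : 0 < Real.cosh (d / 2) := Real.cosh_pos _
  have hc0 : (0:ℝ) < c := Real.cosh_pos _
  have hc1 : (1:ℝ) ≤ c := Real.one_le_cosh _
  have ht0 : 0 < t := by
    rw [ht, Real.tanh_eq_sinh_div_cosh]; positivity
  have ht1 : t < 1 := by
    rw [ht, Real.tanh_eq_sinh_div_cosh, div_lt_one hch]
    exact Real.sinh_lt_cosh _
  -- c * t ≤ 1
  have hct : c * t ≤ 1 := by
    have h1 : c ≤ Real.cosh (Real.arsinh (1 / Real.sinh (d / 2))) := by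
      rw [hc, Real.cosh_le_cosh]
      rw [abs_of_nonneg (by linarith),
        abs_of_nonneg (Real.arsinh_nonneg_iff.2 (by positivity))]
      linarith
    have h2 : Real.cosh (Real.arsinh (1 / Real.sinh (d / 2)))
        = Real.cosh (d / 2) / Real.sinh (d / 2) := by
      rw [Real.cosh_arsinh]
      rw [show 1 + (1 / Real.sinh (d / 2)) ^ 2
          = (Real.cosh (d / 2) / Real.sinh (d / 2)) ^ 2 by
        field_simp
        nlinarith [Real.cosh_sq (d / 2)]]
      exact Real.sqrt_sq (by positivity)
    rw [h2] at h1
    have htt : t = Real.sinh (d / 2) / Real.cosh (d / 2) := by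
      rw [ht, Real.tanh_eq_sinh_div_cosh]
    have h4 : (Real.cosh (d / 2) / Real.sinh (d / 2))
        * (Real.sinh (d / 2) / Real.cosh (d / 2)) = 1 := by
      field_simp
    calc c * t ≤ (Real.cosh (d / 2) / Real.sinh (d / 2))
          * (Real.sinh (d / 2) / Real.cosh (d / 2)) := by
          rw [htt]
          exact mul_le_mul_of_nonneg_right h1 (by positivity)
      _ = 1 := h4
  -- 1 / cosh(d/2)^2 = 1 - t^2
  have hinv : 1 / Real.cosh (d / 2) ^ 2 = 1 - t ^ 2 := by
    rw [ht, Real.tanh_eq_sinh_div_cosh]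
    field_simp
    linarith [Real.cosh_sq (d / 2)]
  -- cosh(d'/2)^2 ≥ cosh(d/2)^2
  have hch' : Real.cosh (d / 2) ^ 2 ≤ Real.cosh (d' / 2) ^ 2 := by
    have h5 : Real.cosh (d / 2) ≤ Real.cosh (d' / 2) := by
      rw [Real.cosh_le_cosh, abs_of_nonneg (by linarith), abs_of_nonneg (by linarith)]
      linarith
    nlinarith [hch]
  -- key inequality
  have hrhs : (1 - t ^ 2) / c
      ≤ (1 / Real.cosh (d / 2) ^ 4) * (1 / c) * Real.cosh (d' / 2) ^ 2 := by
    have h3 : (1 - t ^ 2) / c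
        = (1 / Real.cosh (d / 2) ^ 4) * (1 / c) * Real.cosh (d / 2) ^ 2 := by
      rw [← hinv]; field_simp
    rw [h3]
    exact mul_le_mul_of_nonneg_left hch' (by positivity)
  have hkey : 2 * t ^ 2 * Real.cos ψ ≤ t ^ 2 / c + c * t ^ 4 := by
    have h6 : (1 - t ^ 2) / c ≤ 1 / c - 2 * t ^ 2 * Real.cos ψ + c * t ^ 4 := by
      rw [heq]; exact hrhs
    have hdiv : 1 / c - (1 - t ^ 2) / c = t ^ 2 / c := by
      field_simp
      ring
    linarith
  -- polynomial inequality: t^2/c + c*t^4 ≤ t^2*(1+t)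
  have hclt : (1:ℝ) ≤ c * (1 + t) := by nlinarith
  have hpoly : t ^ 2 / c + c * t ^ 4 ≤ t ^ 2 * (1 + t) := by
    rw [div_add' _ _ _ (ne_of_gt hc0), div_le_iff₀ hc0]
    nlinarith [mul_nonneg (mul_nonneg (mul_nonneg ht0.le ht0.le) ht0.le)
        (mul_nonneg (sub_nonneg.2 hc1) (sub_nonneg.2 hct)),
      mul_nonneg (mul_nonneg ht0.le ht0.le)
        (mul_nonneg (sub_nonneg.2 ht1.le) (sub_nonneg.2 hclt))]
  have h7 : t ^ 2 * (2 * Real.cos ψ) ≤ t ^ 2 * (1 + t) := by linarith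
  have h8 := le_of_mul_le_mul_left h7 (by positivity : (0:ℝ) < t ^ 2)
  linarith
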